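/- For any two lines l1: a1x+b1y+c1=0 and l2: a2x+b2y+c2=0 such that all three colored spreads are defined and nonzero, 1/s_b(l1,l2) + 1/s_r(l1,l2) + 1/s_g(l1,l2) = 2. -/
import Mathlib

/-- Sum of reciprocals of the blue, red and green spreads between two lines is 2. -/
theorem spread_reciprocal_sum {F : Type*} [Field F] (hchar : (2 : F) ≠ 0)
    (a1 b1 c1 a2 b2 c2 : F)
    (hb : (a1 ^ 2 + b1 ^ 2) * (a2 ^ 2 + b2 ^ 2) ≠ 0)
    (hr : (a1 ^ 2 - b1 ^ 2) * (a2 ^ 2 - b2 ^ 2) ≠ 0)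
    (hg : 4 * a1 * b1 * a2 * b2 ≠ 0)
    (hcross : a1 * b2 - a2 * b1 ≠ 0) :
    1 / ((a1 * b2 - a2 * b1) ^ 2 / ((a1 ^ 2 + b1 ^ 2) * (a2 ^ 2 + b2 ^ 2)))
      + 1 / (-((a1 * b2 - a2 * b1) ^ 2 / ((a1 ^ 2 - b1 ^ 2) * (a2 ^ 2 - b2 ^ 2))))
      + 1 / (-((a1 * b2 - a2 * b1) ^ 2 / (4 * a1 * b1 * a2 * b2)))
      = 2 := by
  have hc2 : (a1 * b2 - a2 * b1) ^ 2 ≠ 0 := pow_ne_zero _ hcross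
  field_simp
  ring
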